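/- Let n ≥ 2 and let f : ℝ₊ → ℝ be twice continuously differentiable. Then the function C ↦ f(det C), defined on the set PSym(n) of real symmetric positive definite n×n matrices, is convex if and only if for all s > 0 both f''(s) + ((n-1)/(n·s))·f'(s) ≥ 0 and f'(s) ≤ 0 hold. -/

import Mathlib

open Matrix Finset Set

private lemma hasDerivAt_prod_affine {n : ℕ} (a b : Fin n → ℝ) (t : ℝ) :
    HasDerivAt (fun t => ∏ i, (a i + t * b i))
      (∑ i, (∏ j ∈ Finset.univ.erase i, (a j + t * b j)) * b i) t := by
  have h := HasDerivAt.fun_finsetProd (u := Finset.univ)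
    (f := fun (i : Fin n) (t : ℝ) => a i + t * b i) (f' := fun i => b i) (x := t)
    (fun i _ => ((hasDerivAt_mul_const (b i)).const_add (a i)))
  simpa [smul_eq_mul] using h

private lemma hasDerivAt_d1 {n : ℕ} (a b : Fin n → ℝ) (t : ℝ) :
    HasDerivAt (fun t => ∑ i, (∏ j ∈ Finset.univ.erase i, (a j + t * b j)) * b i)
      (∑ i, (∑ j ∈ (Finset.univ.erase i),
          (∏ k ∈ (Finset.univ.erase i).erase j, (a k + t * b k)) * b j) * b i) t := by
  apply HasDerivAt.fun_sum
  intro i _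
  have h := HasDerivAt.fun_finsetProd (u := Finset.univ.erase i)
    (f := fun (j : Fin n) (t : ℝ) => a j + t * b j) (f' := fun j => b j) (x := t)
    (fun j _ => ((hasDerivAt_mul_const (b j)).const_add (a j)))
  simpa [smul_eq_mul] using h.mul_const (b i)

private lemma d1_eq {n : ℕ} {l b : Fin n → ℝ} (hl : ∀ i, l i ≠ 0) :
    ∑ i, (∏ j ∈ Finset.univ.erase i, l j) * b i = (∏ i, l i) * ∑ i, b i / l i := by
  rw [Finset.mul_sum]
  refine Finset.sum_congr rfl fun i _ => ?_
  have hp : ∏ j ∈ Finset.univ.erase i, l j = (∏ j, l j) / l i := by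
    rw [eq_div_iff (hl i)]
    exact Finset.prod_erase_mul _ _ (Finset.mem_univ i)
  rw [hp]
  field_simp

private lemma d2_eq {n : ℕ} {l b : Fin n → ℝ} (hl : ∀ i, l i ≠ 0) :
    ∑ i, (∑ j ∈ (Finset.univ.erase i),
        (∏ k ∈ (Finset.univ.erase i).erase j, l k) * b j) * b i
      = (∏ i, l i) * ((∑ i, b i / l i) ^ 2 - ∑ i, (b i / l i) ^ 2) := by
  set p := ∏ i, l i with hp
  set S := ∑ i, b i / l i with hS
  have key : ∀ i : Fin n, (∑ j ∈ (Finset.univ.erase i),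
      (∏ k ∈ (Finset.univ.erase i).erase j, l k) * b j) * b i
        = p * ((b i / l i) * (S - b i / l i)) := by
    intro i
    have h1 : ∀ j ∈ Finset.univ.erase i,
        (∏ k ∈ (Finset.univ.erase i).erase j, l k) * b j
          = (p / l i) * (b j / l j) := by
      intro j hj
      have hpe : ∏ k ∈ (Finset.univ.erase i).erase j, l k
          = (p / l i) / l j := by
        rw [div_div, eq_div_iff (mul_ne_zero (hl i) (hl j)), show l i * l j = l j * l i by ring,
          ← mul_assoc]
        rw [Finset.prod_erase_mul _ _ hj]
        exact Finset.prod_erase_mul _ _ (Finset.mem_univ i)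
      rw [hpe]
      field_simp
    rw [Finset.sum_congr rfl h1, ← Finset.mul_sum,
      Finset.sum_erase_eq_sub (Finset.mem_univ i), ← hS]
    field_simp
  rw [Finset.sum_congr rfl (fun i _ => key i), ← Finset.mul_sum]
  congr 1
  have h2 : ∀ i : Fin n, (b i / l i) * (S - b i / l i)
      = (b i / l i) * S - (b i / l i) ^ 2 := fun i => by ring
  rw [Finset.sum_congr rfl (fun i _ => h2 i), Finset.sum_sub_distrib,
    ← Finset.sum_mul, ← hS, sq]

private lemma convexOn_comp_prod_affine {n : ℕ} (hn : 2 ≤ n) {f : ℝ → ℝ}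
    (hf : ContDiffOn ℝ 2 f (Set.Ioi 0))
    (hcond : ∀ s : ℝ, 0 < s →
        0 ≤ deriv (deriv f) s + ((n : ℝ) - 1) / ((n : ℝ) * s) * deriv f s ∧ deriv f s ≤ 0)
    {a b : Fin n → ℝ} (hpos : ∀ t ∈ Set.Icc (0:ℝ) 1, ∀ i, 0 < a i + t * b i) :
    ConvexOn ℝ (Set.Icc (0:ℝ) 1) (fun t => f (∏ i, (a i + t * b i))) := by
  have hn' : (0:ℝ) < n := by positivity
  set p : ℝ → ℝ := fun t => ∏ i, (a i + t * b i) with hpdef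
  set d1 : ℝ → ℝ := fun t => ∑ i, (∏ j ∈ Finset.univ.erase i, (a j + t * b j)) * b i with hd1def
  set d2 : ℝ → ℝ := fun t => ∑ i, (∑ j ∈ (Finset.univ.erase i),
      (∏ k ∈ (Finset.univ.erase i).erase j, (a k + t * b k)) * b j) * b i with hd2def
  have hfd : ∀ s : ℝ, 0 < s → HasDerivAt f (deriv f s) s := fun s hs =>
    ((hf.differentiableOn two_ne_zero).differentiableAt
      (Ioi_mem_nhds hs)).hasDerivAt
  have hfC1 : ContDiffOn ℝ 1 (deriv f) (Set.Ioi 0) :=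
    hf.deriv_of_isOpen isOpen_Ioi (by norm_num)
  have hfd2 : ∀ s : ℝ, 0 < s → HasDerivAt (deriv f) (deriv (deriv f) s) s := fun s hs =>
    ((hfC1.differentiableOn one_ne_zero).differentiableAt (Ioi_mem_nhds hs)).hasDerivAt
  have hppos : ∀ t ∈ Set.Icc (0:ℝ) 1, 0 < p t := fun t ht =>
    Finset.prod_pos fun i _ => hpos t ht i
  have hIoo : ∀ t ∈ interior (Set.Icc (0:ℝ) 1), 0 < p t := by
    rw [interior_Icc]; exact fun t ht => hppos t (Ioo_subset_Icc_self ht)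
  refine convexOn_of_hasDerivWithinAt2_nonneg (convex_Icc 0 1)
    (f' := fun t => deriv f (p t) * d1 t)
    (f'' := fun t => deriv (deriv f) (p t) * d1 t ^ 2 + deriv f (p t) * d2 t)
    ?_ ?_ ?_ ?_
  · have hpc : Continuous p := by
      apply continuous_finset_prod
      intro i _
      continuity
    exact hf.continuousOn.comp hpc.continuousOn fun t ht => hppos t ht
  · intro t ht
    exact (((hfd _ (hIoo t ht)).comp t (hasDerivAt_prod_affine a b t))).hasDerivWithinAt
  · intro t ht
    have h1 : HasDerivAt (fun t => deriv f (p t))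
        (deriv (deriv f) (p t) * d1 t) t :=
      (hfd2 _ (hIoo t ht)).comp t (hasDerivAt_prod_affine a b t)
    have h2 := h1.fun_mul (hasDerivAt_d1 a b t)
    refine (HasDerivAt.hasDerivWithinAt ?_)
    convert h2 using 1
    · rfl
    simp only [hd1def, hd2def]
    ring
  · intro t ht
    have hpt : 0 < p t := hIoo t ht
    have hlt : ∀ i, (0:ℝ) < a i + t * b i := by
      rw [interior_Icc] at ht
      exact hpos t (Ioo_subset_Icc_self ht)
    have hlne : ∀ i, a i + t * b i ≠ 0 := fun i => (hlt i).ne'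
    set S := ∑ i, b i / (a i + t * b i) with hSdef
    set Q := ∑ i, (b i / (a i + t * b i)) ^ 2 with hQdef
    have hd1 : d1 t = p t * S := d1_eq hlne
    have hd2 : d2 t = p t * (S ^ 2 - Q) := d2_eq hlne
    have hCS : S ^ 2 ≤ (n:ℝ) * Q := by
      have := sq_sum_le_card_mul_sum_sq (s := Finset.univ)
        (f := fun i => b i / (a i + t * b i))
      simpa [hSdef, hQdef] using this
    obtain ⟨h1, h2⟩ := hcond (p t) hpt
    have hns : (0:ℝ) < (n:ℝ) * p t := by positivity
    have hkey : ((n:ℝ) * p t) * (((n:ℝ) - 1) / ((n:ℝ) * p t) * deriv f (p t))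
        = ((n:ℝ) - 1) * deriv f (p t) := by
      field_simp
    have h1' : 0 ≤ ((n:ℝ) * p t) * deriv (deriv f) (p t) + ((n:ℝ) - 1) * deriv f (p t) := by
      have h3 := mul_nonneg hns.le h1
      rw [mul_add, hkey] at h3
      linarith
    show 0 ≤ deriv (deriv f) (p t) * d1 t ^ 2 + deriv f (p t) * d2 t
    rw [hd1, hd2]
    nlinarith [mul_nonneg h1' (mul_nonneg hpt.le (sq_nonneg S)),
      mul_nonneg (mul_nonneg (neg_nonneg.2 h2) hpt.le) (sub_nonneg.2 hCS),
      hpt, hn', sq_nonneg S]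

private lemma deriv_nonneg_of_monotoneOn {g : ℝ → ℝ} {x d a b : ℝ} (hx : x ∈ Set.Ioo a b)
    (hmono : MonotoneOn g (Set.Ioo a b)) (hd : HasDerivAt g d x) : 0 ≤ d := by
  have h1 : Filter.Tendsto (slope g x) (nhdsWithin x (Set.Ioi x)) (nhds d) :=
    (hasDerivAt_iff_tendsto_slope.1 hd).mono_left
      (nhdsWithin_mono x fun y hy => ne_of_gt hy)
  refine ge_of_tendsto h1 ?_
  filter_upwards [self_mem_nhdsWithin,
    mem_nhdsWithin_of_mem_nhds (Iio_mem_nhds hx.2)] with y hy1 hy2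
  have hyI : y ∈ Set.Ioo a b := ⟨lt_trans hx.1 hy1, hy2⟩
  rw [slope_def_field]
  have h2 := hmono hx hyI (le_of_lt hy1)
  have hxy : (0:ℝ) < y - x := sub_pos.2 hy1
  exact div_nonneg (sub_nonneg.2 h2) hxy.le

private lemma convexOn_psi_of_matrix {n : ℕ} {f : ℝ → ℝ}
    (hg : ConvexOn ℝ {C : Matrix (Fin n) (Fin n) ℝ | C.PosDef} (fun C => f C.det))
    {a b : Fin n → ℝ} (hpos : ∀ t ∈ Set.Icc (-(2:ℝ)⁻¹) 2⁻¹, ∀ i, 0 < a i + t * b i) :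
    ConvexOn ℝ (Set.Icc (-(2:ℝ)⁻¹) 2⁻¹) (fun t => f (∏ i, (a i + t * b i))) := by
  refine ⟨convex_Icc _ _, ?_⟩
  intro x hx y hy c d hc hd hcd
  set D : ℝ → Matrix (Fin n) (Fin n) ℝ := fun t => diagonal (fun i => a i + t * b i) with hD
  have hDpos : ∀ t ∈ Set.Icc (-(2:ℝ)⁻¹) 2⁻¹, (D t).PosDef := fun t ht =>
    Matrix.posDef_diagonal_iff.2 (hpos t ht)
  have hcomb : c • D x + d • D y = D (c * x + d * y) := by
    ext i j
    by_cases hij : i = j <;>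
      simp [hD, Matrix.diagonal_apply, hij, Matrix.add_apply, Matrix.smul_apply] <;>
      linear_combination (a j) * hcd
  have h := hg.2 (hDpos x hx) (hDpos y hy) hc hd hcd
  rw [hcomb] at h
  simpa only [hD, det_diagonal, smul_eq_mul] using h

private lemma second_deriv_nonneg_at_zero {n : ℕ} {f : ℝ → ℝ}
    (hf : ContDiffOn ℝ 2 f (Set.Ioi 0)) {a b : Fin n → ℝ}
    (hψ : ConvexOn ℝ (Set.Icc (-(2:ℝ)⁻¹) 2⁻¹) (fun t => f (∏ i, (a i + t * b i))))
    (hpos : ∀ t ∈ Set.Icc (-(2:ℝ)⁻¹) 2⁻¹, ∀ i, 0 < a i + t * b i) :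
    0 ≤ deriv (deriv f) (∏ i, a i)
          * (∑ i, (∏ j ∈ Finset.univ.erase i, a j) * b i) ^ 2
        + deriv f (∏ i, a i)
          * (∑ i, (∑ j ∈ (Finset.univ.erase i),
              (∏ k ∈ (Finset.univ.erase i).erase j, a k) * b j) * b i) := by
  set p : ℝ → ℝ := fun t => ∏ i, (a i + t * b i) with hpdef
  set d1 : ℝ → ℝ := fun t => ∑ i, (∏ j ∈ Finset.univ.erase i, (a j + t * b j)) * b i with hd1def
  set d2 : ℝ → ℝ := fun t => ∑ i, (∑ j ∈ (Finset.univ.erase i),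
      (∏ k ∈ (Finset.univ.erase i).erase j, (a k + t * b k)) * b j) * b i with hd2def
  have hfd : ∀ s : ℝ, 0 < s → HasDerivAt f (deriv f s) s := fun s hs =>
    ((hf.differentiableOn two_ne_zero).differentiableAt (Ioi_mem_nhds hs)).hasDerivAt
  have hfC1 : ContDiffOn ℝ 1 (deriv f) (Set.Ioi 0) :=
    hf.deriv_of_isOpen isOpen_Ioi (by norm_num)
  have hfd2 : ∀ s : ℝ, 0 < s → HasDerivAt (deriv f) (deriv (deriv f) s) s := fun s hs =>
    ((hfC1.differentiableOn one_ne_zero).differentiableAt (Ioi_mem_nhds hs)).hasDerivAt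
  have hpI : ∀ t ∈ Set.Ioo (-(2:ℝ)⁻¹) 2⁻¹, 0 < p t := fun t ht =>
    Finset.prod_pos fun i _ => hpos t (Ioo_subset_Icc_self ht) i
  set ψ : ℝ → ℝ := fun t => f (p t) with hψdef
  set φ1 : ℝ → ℝ := fun t => deriv f (p t) * d1 t with hφ1def
  have hdrv : ∀ t ∈ Set.Ioo (-(2:ℝ)⁻¹) 2⁻¹, HasDerivAt ψ (φ1 t) t := fun t ht =>
    (hfd _ (hpI t ht)).comp t (hasDerivAt_prod_affine a b t)
  have hconvI : ConvexOn ℝ (Set.Ioo (-(2:ℝ)⁻¹) 2⁻¹) ψ :=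
    hψ.subset Ioo_subset_Icc_self (convex_Ioo _ _)
  have hmono : MonotoneOn (deriv ψ) (Set.Ioo (-(2:ℝ)⁻¹) 2⁻¹) :=
    hconvI.monotoneOn_deriv (fun x hx => (hdrv x hx).differentiableAt)
  have hmono' : MonotoneOn φ1 (Set.Ioo (-(2:ℝ)⁻¹) 2⁻¹) := by
    intro x hx y hy hxy
    rw [← (hdrv x hx).deriv, ← (hdrv y hy).deriv]
    exact hmono hx hy hxy
  have h0 : (0:ℝ) ∈ Set.Ioo (-(2:ℝ)⁻¹) 2⁻¹ := by norm_num
  have hp0 : 0 < p 0 := hpI 0 h0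
  have hφ1' : HasDerivAt φ1
      (deriv (deriv f) (p 0) * d1 0 ^ 2 + deriv f (p 0) * d2 0) 0 := by
    have h1 : HasDerivAt (fun t => deriv f (p t)) (deriv (deriv f) (p 0) * d1 0) 0 :=
      (hfd2 _ hp0).comp 0 (hasDerivAt_prod_affine a b 0)
    have h2 := h1.fun_mul (hasDerivAt_d1 a b 0)
    convert h2 using 1
    · rfl
    · rfl
    simp only [hd1def, hd2def]
    ring
  have hfin := deriv_nonneg_of_monotoneOn h0 hmono' hφ1'
  have hp00 : p 0 = ∏ i, a i := by simp [hpdef]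
  have hd10 : d1 0 = ∑ i, (∏ j ∈ Finset.univ.erase i, a j) * b i := by simp [hd1def]
  have hd20 : d2 0 = ∑ i, (∑ j ∈ (Finset.univ.erase i),
      (∏ k ∈ (Finset.univ.erase i).erase j, a k) * b j) * b i := by simp [hd2def]
  rwa [hp00, hd10, hd20] at hfin

private lemma posDef_conj {n : ℕ} {A B : Matrix (Fin n) (Fin n) ℝ} (hA : A.PosDef)
    (hB : IsUnit B.det) : (B * A * Bᴴ).PosDef := by
  refine Matrix.PosDef.of_dotProduct_mulVec_pos (Matrix.isHermitian_mul_mul_conjTranspose _ hA.1) fun x hx => ?_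
  have hB' : IsUnit (Bᴴ).det := by
    rw [Matrix.det_conjTranspose]; exact hB.star
  have hne : Bᴴ *ᵥ x ≠ 0 := by
    intro h
    apply hx
    have h2 : (Bᴴ)⁻¹ *ᵥ (Bᴴ *ᵥ x) = (Bᴴ)⁻¹ *ᵥ (0 : Fin n → ℝ) := congrArg _ h
    rwa [Matrix.mulVec_mulVec, Matrix.nonsing_inv_mul _ hB', Matrix.one_mulVec,
      Matrix.mulVec_zero] at h2
  simpa only [star_mulVec, dotProduct_mulVec, vecMul_vecMul, conjTranspose_conjTranspose] using hA.dotProduct_mulVec_pos hne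

private lemma det_convex_comb {n : ℕ} {C1 C2 : Matrix (Fin n) (Fin n) ℝ}
    (h1 : C1.PosDef) (h2 : C2.PosDef) :
    ∃ μ : Fin n → ℝ, (∀ i, 0 < μ i) ∧
      ∀ x y : ℝ, (x • C1 + y • C2).det = C1.det * ∏ i, (x + y * μ i) := by
  open scoped MatrixOrder in
  obtain ⟨R, hRH, hR2⟩ : ∃ R : Matrix (Fin n) (Fin n) ℝ, R.IsHermitian ∧ R * R = C1 :=
    ⟨CFC.sqrt C1, (CFC.sqrt_nonneg C1).posSemidef.isHermitian,
      CFC.sqrt_mul_sqrt_self C1 h1.posSemidef.nonneg⟩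
  have hdet : R.det * R.det = C1.det := by rw [← Matrix.det_mul, hR2]
  have hRdet : IsUnit R.det := by
    rw [isUnit_iff_ne_zero]
    intro h
    have hd := h1.det_pos
    rw [← hdet, h, mul_zero] at hd
    exact lt_irrefl _ hd
  have hRinv : R * R⁻¹ = 1 := Matrix.mul_nonsing_inv R hRdet
  have hRinv' : R⁻¹ * R = 1 := Matrix.nonsing_inv_mul R hRdet
  set A := R⁻¹ * C2 * R⁻¹ with hAdef
  have hAconj : A = R⁻¹ * C2 * (R⁻¹)ᴴ := by
    rw [hAdef, Matrix.conjTranspose_nonsing_inv, hRH.eq]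
  have hApos : A.PosDef := by
    rw [hAconj]
    exact posDef_conj h2 (Matrix.isUnit_nonsing_inv_det R hRdet)
  refine ⟨hApos.1.eigenvalues, fun i => hApos.eigenvalues_pos i, fun x y => ?_⟩
  have hRAR : R * A * R = C2 := by
    rw [hAdef]
    calc R * (R⁻¹ * C2 * R⁻¹) * R
        = (R * R⁻¹) * C2 * (R⁻¹ * R) := by noncomm_ring
      _ = C2 := by rw [hRinv, hRinv', Matrix.one_mul, Matrix.mul_one]
  have hcomb : x • C1 + y • C2 = R * (x • (1:Matrix (Fin n) (Fin n) ℝ) + y • A) * R := by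
    rw [Matrix.mul_add, Matrix.add_mul]
    rw [Matrix.mul_smul, Matrix.smul_mul, Matrix.mul_smul, Matrix.smul_mul,
      Matrix.mul_one, hR2, hRAR]
  rw [hcomb, Matrix.det_mul, Matrix.det_mul]
  have hrearr : R.det * (x • (1:Matrix (Fin n) (Fin n) ℝ) + y • A).det * R.det
      = C1.det * (x • (1:Matrix (Fin n) (Fin n) ℝ) + y • A).det := by
    rw [← hdet]; ring
  rw [hrearr]
  congr 1
  set U : Matrix (Fin n) (Fin n) ℝ := (hApos.1.eigenvectorUnitary : Matrix (Fin n) (Fin n) ℝ)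
    with hUdef
  have hU : U * star U = 1 := (Matrix.mem_unitaryGroup_iff).mp hApos.1.eigenvectorUnitary.2
  have hUunit : IsUnit U := by
    rw [Matrix.isUnit_iff_isUnit_det]
    exact IsUnit.of_mul_eq_one _ (by rw [← Matrix.det_mul, hU, Matrix.det_one])
  have hUinv : U⁻¹ = star U := Matrix.inv_eq_right_inv hU
  have hspec : A = U * Matrix.diagonal (RCLike.ofReal ∘ hApos.1.eigenvalues) * star U :=
    hApos.1.spectral_theorem
  have hconj : x • (1:Matrix (Fin n) (Fin n) ℝ) + y • A
      = U * (x • (1:Matrix (Fin n) (Fin n) ℝ)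
          + y • Matrix.diagonal (RCLike.ofReal ∘ hApos.1.eigenvalues)) * star U := by
    rw [Matrix.mul_add, Matrix.add_mul]
    rw [Matrix.mul_smul, Matrix.smul_mul, Matrix.mul_smul, Matrix.smul_mul,
      Matrix.mul_one, hU, ← hspec]
  rw [hconj, ← hUinv, Matrix.det_conj hUunit]
  have hdiag : x • (1:Matrix (Fin n) (Fin n) ℝ)
      + y • Matrix.diagonal (RCLike.ofReal ∘ hApos.1.eigenvalues)
      = Matrix.diagonal (fun i => x + y * hApos.1.eigenvalues i) := by
    ext i j
    by_cases hij : i = j <;>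
      simp [Matrix.add_apply, Matrix.smul_apply, Matrix.one_apply, Matrix.diagonal_apply, hij,
        RCLike.ofReal]
  rw [hdiag, Matrix.det_diagonal]

private lemma convex_posDef_set (n : ℕ) :
    Convex ℝ {C : Matrix (Fin n) (Fin n) ℝ | C.PosDef} := by
  intro C1 hC1 C2 hC2 a b ha hb hab
  have hab' : 0 < a ∨ 0 < b := by
    by_contra h
    push_neg at h
    nlinarith [h.1, h.2]
  refine Matrix.PosDef.of_dotProduct_mulVec_pos ?_ fun x hx => ?_
  · have h1 : (a • C1 + b • C2)ᴴ = a • C1ᴴ + b • C2ᴴ := by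
      rw [Matrix.conjTranspose_add, Matrix.conjTranspose_smul, Matrix.conjTranspose_smul]
      simp [star_trivial]
    rw [Matrix.IsHermitian, h1, hC1.1.eq, hC2.1.eq]
  · have hq : star x ⬝ᵥ ((a • C1 + b • C2) *ᵥ x)
        = a * (star x ⬝ᵥ (C1 *ᵥ x)) + b * (star x ⬝ᵥ (C2 *ᵥ x)) := by
      rw [Matrix.add_mulVec, Matrix.smul_mulVec, Matrix.smul_mulVec,
        dotProduct_add, dotProduct_smul, dotProduct_smul]
      simp [smul_eq_mul]
    rw [hq]
    have q1 := Matrix.PosDef.dotProduct_mulVec_pos hC1 hx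
    have q2 := Matrix.PosDef.dotProduct_mulVec_pos hC2 hx
    rcases hab' with h | h
    · have := mul_pos h q1
      nlinarith [mul_nonneg hb q2.le]
    · have := mul_pos h q2
      nlinarith [mul_nonneg ha q1.le]

theorem convexOn_f_det_iff (n : ℕ) (hn : 2 ≤ n) (f : ℝ → ℝ)
    (hf : ContDiffOn ℝ 2 f (Set.Ioi 0)) :
    ConvexOn ℝ {C : Matrix (Fin n) (Fin n) ℝ | C.PosDef} (fun C => f C.det) ↔
      ∀ s : ℝ, 0 < s →
        0 ≤ deriv (deriv f) s + ((n : ℝ) - 1) / ((n : ℝ) * s) * deriv f s ∧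
        deriv f s ≤ 0 := by
  haveI : NeZero n := ⟨by omega⟩
  have hn' : (0:ℝ) < n := by positivity
  constructor
  · -- convexity implies the differential conditions
    intro hg s hs
    set a : Fin n → ℝ := fun i => if i = 0 then s else 1 with hadef
    have ha_pos : ∀ i, 0 < a i := fun i => by
      by_cases h : i = 0 <;> simp [hadef, h, hs]
    have ha_ne : ∀ i, a i ≠ 0 := fun i => (ha_pos i).ne'
    have hprod_a : ∏ i, a i = s := by
      rw [hadef]
      simp [Finset.prod_ite_eq']
    constructor
    · -- first condition, direction b = a
      have hpos : ∀ t ∈ Set.Icc (-(2:ℝ)⁻¹) 2⁻¹, ∀ i, 0 < a i + t * a i := by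
        intro t ht i
        nlinarith [ha_pos i, ht.1, ht.2]
      have key := second_deriv_nonneg_at_zero hf (convexOn_psi_of_matrix hg hpos) hpos
      rw [d1_eq ha_ne, d2_eq ha_ne, hprod_a] at key
      have hSa : ∑ i, a i / a i = (n:ℝ) := by
        rw [Finset.sum_congr rfl fun i _ => div_self (ha_ne i)]
        simp
      have hQa : ∑ i, (a i / a i) ^ 2 = (n:ℝ) := by
        rw [Finset.sum_congr rfl fun i _ => by rw [div_self (ha_ne i), one_pow]]
        simp
      rw [hSa, hQa] at key
      have hns : (0:ℝ) < (n:ℝ) * s := by positivity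
      have h5 : 0 ≤ ((n:ℝ) * s) * deriv (deriv f) s + ((n:ℝ) - 1) * deriv f s := by
        by_contra hcon
        push_neg at hcon
        nlinarith [key, hns]
      have heq : deriv (deriv f) s + ((n:ℝ) - 1) / ((n:ℝ) * s) * deriv f s
          = (((n:ℝ) * s) * deriv (deriv f) s + ((n:ℝ) - 1) * deriv f s) / ((n:ℝ) * s) := by
        field_simp
      rw [heq]
      exact div_nonneg h5 hns.le
    · -- second condition, direction b with zero trace-like sum
      set i1 : Fin n := ⟨1, by omega⟩ with hi1def
      have h01 : (0 : Fin n) ≠ i1 := by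
        intro h
        have := congrArg Fin.val h
        simp [hi1def] at this
      set b : Fin n → ℝ := fun i => if i = 0 then s else if i = i1 then (-1:ℝ) else 0 with hbdef
      have hpos : ∀ t ∈ Set.Icc (-(2:ℝ)⁻¹) 2⁻¹, ∀ i, 0 < a i + t * b i := by
        intro t ht i
        rw [hadef, hbdef]
        by_cases h0 : i = 0
        · simp only [if_pos h0]
          nlinarith [ht.1, ht.2, hs]
        · by_cases h1 : i = i1
          · simp only [if_neg h0, if_pos h1]
            linarith [ht.1, ht.2]
          · simp only [if_neg h0, if_neg h1]
            norm_num
      have key := second_deriv_nonneg_at_zero hf (convexOn_psi_of_matrix hg hpos) hpos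
      rw [d1_eq ha_ne, d2_eq ha_ne, hprod_a] at key
      have hterm : ∀ i : Fin n, b i / a i
          = (if i = 0 then (1:ℝ) else 0) + (if i = i1 then (-1:ℝ) else 0) := by
        intro i
        rw [hadef, hbdef]
        by_cases h0 : i = 0
        · have h1 : ¬ i = i1 := fun hc => h01 (h0 ▸ hc)
          simp only [if_pos h0, if_neg h1]
          rw [div_self hs.ne']
          norm_num
        · by_cases h1 : i = i1
          · simp only [if_neg h0, if_pos h1]
            norm_num
          · simp only [if_neg h0, if_neg h1]
            norm_num
      have hterm2 : ∀ i : Fin n, (b i / a i) ^ 2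
          = (if i = 0 then (1:ℝ) else 0) + (if i = i1 then (1:ℝ) else 0) := by
        intro i
        rw [hadef, hbdef]
        by_cases h0 : i = 0
        · have h1 : ¬ i = i1 := fun hc => h01 (h0 ▸ hc)
          simp only [if_pos h0, if_neg h1]
          rw [div_self hs.ne']
          norm_num
        · by_cases h1 : i = i1
          · simp only [if_neg h0, if_pos h1]
            norm_num
          · simp only [if_neg h0, if_neg h1]
            norm_num
      have hSb : ∑ i, b i / a i = 0 := by
        rw [Finset.sum_congr rfl fun i _ => hterm i, Finset.sum_add_distrib]
        simp [Finset.sum_ite_eq']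
      have hQb : ∑ i, (b i / a i) ^ 2 = 2 := by
        rw [Finset.sum_congr rfl fun i _ => hterm2 i, Finset.sum_add_distrib]
        simp [Finset.sum_ite_eq']
        norm_num
      rw [hSb, hQb] at key
      nlinarith [key, hs]
  · -- differential conditions imply convexity
    intro hcond
    refine ⟨convex_posDef_set n, ?_⟩
    intro C1 hC1 C2 hC2 x y hx hy hxy
    obtain ⟨μ, hμ, hdet⟩ := det_convex_comb hC1 hC2
    set c := C1.det with hcdef
    have hc : 0 < c := hC1.det_pos
    set a : Fin n → ℝ := fun i => if i = (0:Fin n) then c else 1 with hadef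
    set b : Fin n → ℝ := fun i => (if i = (0:Fin n) then c else 1) * (μ i - 1) with hbdef
    have hfact : ∀ (t : ℝ) i, a i + t * b i
        = (if i = (0:Fin n) then c else 1) * ((1 - t) + t * μ i) := by
      intro t i
      by_cases h : i = 0 <;> simp [hadef, hbdef, h] <;> ring
    have hfactprod : ∀ t : ℝ, ∏ i, (a i + t * b i) = c * ∏ i, ((1 - t) + t * μ i) := by
      intro t
      rw [Finset.prod_congr rfl fun i _ => hfact t i, Finset.prod_mul_distrib]
      congr 1
      simp [Finset.prod_ite_eq']
    have hpos : ∀ t ∈ Set.Icc (0:ℝ) 1, ∀ i, 0 < a i + t * b i := by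
      intro t ht i
      rw [hfact t i]
      have h2 : 0 < (1 - t) + t * μ i := by
        rcases eq_or_lt_of_le ht.1 with h | h
        · rw [← h]; norm_num
        · nlinarith [mul_pos h (hμ i), ht.2]
      by_cases h : i = 0
      · rw [if_pos h]
        exact mul_pos hc h2
      · rw [if_neg h, one_mul]
        exact h2
    have hψ := convexOn_comp_prod_affine hn hf hcond hpos
    have happly := hψ.2 (left_mem_Icc.2 (by norm_num)) (right_mem_Icc.2 (by norm_num)) hx hy hxy
    simp only [smul_eq_mul, mul_zero, mul_one, zero_add] at happly
    have hψy : (∏ i, (a i + y * b i)) = (x • C1 + y • C2).det := by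
      rw [hfactprod y, hdet x y]
      congr 1
      refine Finset.prod_congr rfl fun i _ => ?_
      have : x = 1 - y := by linarith
      rw [this]
    have hψ0 : (∏ i, (a i + (0:ℝ) * b i)) = C1.det := by
      rw [hfactprod 0]
      simp [hcdef]
    have hψ1 : (∏ i, (a i + (1:ℝ) * b i)) = C2.det := by
      rw [hfactprod 1]
      have h21 := hdet 0 1
      simp only [zero_smul, one_smul, zero_add] at h21
      rw [h21]
      simp
    rw [hψy, hψ0, hψ1] at happly
    simpa [smul_eq_mul] using happly
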